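/- Let a_n = 4n²·e^{-2n}·Σ_{i=2}^{n} (2n)^i/i!. Then a_n → 0 as n → ∞. -/

import Mathlib

open Nat

lemma aux_fact (i k : ℕ) : (i + k)! ≤ i ! * (i + k) ^ k := by
  induction k with
  | zero => simp
  | succ k ih =>
    have h : (i + k) ^ k ≤ (i + k + 1) ^ k := Nat.pow_le_pow_left (by omega) k
    calc (i + (k + 1))! = (i + k + 1) * (i + k)! := rfl
      _ ≤ (i + k + 1) * (i ! * (i + k) ^ k) := Nat.mul_le_mul_left _ ih
      _ ≤ (i + k + 1) * (i ! * (i + k + 1) ^ k) := Nat.mul_le_mul_left _ (Nat.mul_le_mul_left _ h)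
      _ = i ! * (i + k + 1) ^ (k + 1) := by ring

lemma aux_fact' {i n : ℕ} (h : i ≤ n) : n ! ≤ i ! * n ^ (n - i) := by
  have := aux_fact i (n - i)
  rwa [Nat.add_sub_cancel' h] at this

-- term monotonicity
lemma term_le {n i : ℕ} (hi : i ≤ n) :
    (2 * (n : ℝ)) ^ i / (Nat.factorial i) ≤ (2 * (n : ℝ)) ^ n / (Nat.factorial n) := by
  have hfi : (0:ℝ) < (Nat.factorial i : ℝ) := by exact_mod_cast Nat.factorial_pos i
  have hfn : (0:ℝ) < (Nat.factorial n : ℝ) := by exact_mod_cast Nat.factorial_pos n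
  rw [div_le_div_iff₀ hfi hfn]
  have key : (n ! : ℝ) ≤ (i ! : ℝ) * (2 * (n:ℝ)) ^ (n - i) := by
    calc (n ! : ℝ) ≤ (i ! : ℝ) * (n:ℝ) ^ (n - i) := by exact_mod_cast aux_fact' hi
      _ ≤ (i ! : ℝ) * (2 * (n:ℝ)) ^ (n - i) := by
        gcongr
        nlinarith [Nat.cast_nonneg (α := ℝ) n]

  calc (2 * (n : ℝ)) ^ i * ↑n ! ≤ (2 * (n : ℝ)) ^ i * ((i ! : ℝ) * (2 * (n:ℝ)) ^ (n - i)) := by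
        gcongr
    _ = (2 * (n : ℝ)) ^ (i + (n - i)) * ↑i ! := by rw [pow_add]; ring
    _ = (2 * (n : ℝ)) ^ n * ↑i ! := by rw [Nat.add_sub_cancel' hi]

theorem stmt_14 :
    Filter.Tendsto
      (fun n : ℕ => 4 * (n : ℝ) ^ 2 * Real.exp (-2 * n) *
        ∑ i ∈ Finset.Icc 2 n, (2 * (n : ℝ)) ^ i / (Nat.factorial i))
      Filter.atTop (nhds 0) := by
  have hg : Filter.Tendsto (fun n : ℕ => 4 * (n : ℝ) ^ 3 * (2 / Real.exp 1) ^ n)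
      Filter.atTop (nhds 0) := by
    have hr : |2 / Real.exp 1| < 1 := by
      rw [abs_of_pos (by positivity), div_lt_one (Real.exp_pos 1)]
      nlinarith [Real.exp_one_gt_d9]
    have := (tendsto_pow_const_mul_const_pow_of_abs_lt_one 3 hr).const_mul (4 : ℝ)
    simpa [mul_assoc] using this
  apply squeeze_zero (fun n => by positivity) _ hg
  intro n
  have h1 : ∑ i ∈ Finset.Icc 2 n, (2 * (n : ℝ)) ^ i / (Nat.factorial i) ≤
      ((Finset.Icc 2 n).card : ℝ) * ((2 * (n : ℝ)) ^ n / (Nat.factorial n)) := by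
    simpa [nsmul_eq_mul] using
      Finset.sum_le_card_nsmul (Finset.Icc 2 n) _ ((2 * (n : ℝ)) ^ n / (Nat.factorial n))
        (fun i hi => term_le (Finset.mem_Icc.mp hi).2)
  have h2 : ((Finset.Icc 2 n).card : ℝ) ≤ (n : ℝ) := by
    have : (Finset.Icc 2 n).card ≤ n := by rw [Nat.card_Icc]; omega
    exact_mod_cast this
  have h3 : (2 * (n : ℝ)) ^ n / (Nat.factorial n) ≤ 2 ^ n * Real.exp n := by
    rw [mul_pow, mul_div_assoc]
    exact mul_le_mul_of_nonneg_left
      ((Real.pow_div_factorial_le_exp (n:ℝ) (Nat.cast_nonneg n) n)) (by positivity)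
  have hT : (0:ℝ) ≤ (2 * (n : ℝ)) ^ n / (Nat.factorial n) := by positivity
  have hS : ∑ i ∈ Finset.Icc 2 n, (2 * (n : ℝ)) ^ i / (Nat.factorial i) ≤
      (n : ℝ) * (2 ^ n * Real.exp n) :=
    h1.trans (mul_le_mul h2 h3 hT (Nat.cast_nonneg n))
  calc 4 * (n : ℝ) ^ 2 * Real.exp (-2 * n) *
        ∑ i ∈ Finset.Icc 2 n, (2 * (n : ℝ)) ^ i / (Nat.factorial i)
      ≤ 4 * (n : ℝ) ^ 2 * Real.exp (-2 * n) * ((n : ℝ) * (2 ^ n * Real.exp n)) :=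
        mul_le_mul_of_nonneg_left hS (by positivity)
    _ = 4 * (n : ℝ) ^ 3 * (2 / Real.exp 1) ^ n := by
        rw [div_pow, Real.exp_one_pow, div_eq_mul_inv, ← Real.exp_neg,
          show -(n:ℝ) = -2 * n + n by ring, Real.exp_add]
        ring
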